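/- Let M be a matroid on the ground set {1,…,n} with nonempty collection of bases B and with no coloops, and let A¹ = { e_k + Σ_{j∉T} e_j : T ∈ B, k ∈ T }, A² = { 2e_q + Σ_{j∈{1,…,n}∖(T∪{q})} e_j : T ∈ B, q ∉ T }, and A = A¹ ∪ A². Let I ⊊ {1,…,n} be a proper subset and let a ∈ A² be minimal for I in A², i.e., there is no a' ∈ A² with a'_i ≤ a_i for all i ∈ I and a'_i < a_i for some i ∈ I. Then the set Γ_{I,a} = { b ∈ A : b_i = a_i for all i ∈ I } is the intersection of A with a face of the polytope conv(A): there exists v ∈ ℝⁿ such that Γ_{I,a} = { b ∈ A : ⟨v,b⟩ = min_{c∈A} ⟨v,c⟩ }. -/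

import Mathlib

namespace MSF
variable {n : ℕ}

open scoped Classical

noncomputable def vec (T : Set (Fin n)) (k : Fin n) : Fin n → ℕ :=
  Set.indicator Tᶜ (fun _ => 1) + Pi.single k 1

lemma vec_apply (T : Set (Fin n)) (k i : Fin n) :
    vec T k i = (if i ∈ T then 0 else 1) + (if i = k then 1 else 0) := by
  simp [vec, Set.indicator_apply, Pi.single_apply]

lemma vec2 (T : Set (Fin n)) (q : Fin n) (hq : q ∉ T) :
    Set.indicator (T ∪ {q})ᶜ (fun _ => (1:ℕ)) + Pi.single q 2 = vec T q := by
  funext i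
  simp only [vec, Pi.add_apply, Set.indicator_apply, Pi.single_apply,
    Set.mem_compl_iff, Set.mem_union, Set.mem_singleton_iff]
  by_cases h : i = q
  · subst h; simp [hq]
  · simp [h]

lemma sum_vec (v : Fin n → ℝ) (T : Set (Fin n)) (k : Fin n) :
    ∑ i, v i * (vec T k i : ℝ) = (∑ i, if i ∈ T then 0 else v i) + v k := by
  have h : ∀ i, v i * (vec T k i : ℝ)
      = (if i ∈ T then 0 else v i) + (if i = k then v i else 0) := by
    intro i; rw [vec_apply]; push_cast
    by_cases h2 : i = k
    · subst h2; by_cases h1 : i ∈ T <;> (simp [h1]; try ring)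
    · by_cases h1 : i ∈ T <;> simp [h1, h2]
  rw [Finset.sum_congr rfl (fun i _ => h i), Finset.sum_add_distrib]
  simp

end MSF

open scoped Classical in
theorem minimal_sets_are_faces (n : ℕ) (M : Matroid (Fin n)) (hE : M.E = Set.univ)
    (hB : ∃ T, M.IsBase T) (hcoloop : ∀ k : Fin n, ∃ T, M.IsBase T ∧ k ∉ T)
    (A1 A2 : Set (Fin n → ℕ))
    (hA1 : A1 = {b | ∃ T k, M.IsBase T ∧ k ∈ T ∧
        b = Set.indicator Tᶜ (fun _ => 1) + Pi.single k 1})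
    (hA2 : A2 = {a | ∃ T q, M.IsBase T ∧ q ∉ T ∧
        a = Set.indicator (T ∪ {q})ᶜ (fun _ => 1) + Pi.single q 2})
    (I : Set (Fin n)) (hI : I ≠ Set.univ)
    (a : Fin n → ℕ) (ha : a ∈ A2)
    (hmin : ¬ ∃ a' ∈ A2, (∀ i ∈ I, a' i ≤ a i) ∧ ∃ i ∈ I, a' i < a i) :
    ∃ v : Fin n → ℝ,
      {b ∈ A1 ∪ A2 | ∀ i ∈ I, b i = a i} =
      {b ∈ A1 ∪ A2 | ∀ c ∈ A1 ∪ A2, ∑ i, v i * (b i : ℝ) ≤ ∑ i, v i * (c i : ℝ)} := by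
  classical
  rw [hA2] at ha
  obtain ⟨T, q, hT, hqT, haeq⟩ := ha
  rw [MSF.vec2 T q hqT] at haeq
  have memA : ∀ b, b ∈ A1 ∪ A2 ↔ ∃ T' k', M.IsBase T' ∧ b = MSF.vec T' k' := by
    intro b
    constructor
    · rintro (hb | hb)
      · rw [hA1] at hb; obtain ⟨T', k', hT', _, rfl⟩ := hb
        exact ⟨T', k', hT', rfl⟩
      · rw [hA2] at hb; obtain ⟨T', q', hT', hq', rfl⟩ := hb
        exact ⟨T', q', hT', MSF.vec2 T' q' hq'⟩
    · rintro ⟨T', k', hT', rfl⟩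
      by_cases hk : k' ∈ T'
      · left; rw [hA1]; exact ⟨T', k', hT', hk, rfl⟩
      · right; rw [hA2]; exact ⟨T', k', hT', hk, (MSF.vec2 T' k' hk).symm⟩
  have hmin' : ∀ T' q', M.IsBase T' → q' ∉ T' →
      (∀ i ∈ I, MSF.vec T' q' i ≤ a i) → (∃ i ∈ I, MSF.vec T' q' i < a i) → False := by
    intro T' q' hT' hq' hle hlt
    exact hmin ⟨MSF.vec T' q',
      by rw [hA2]; exact ⟨T', q', hT', hq', (MSF.vec2 T' q' hq').symm⟩, hle, hlt⟩
  have ha_i : ∀ i, a i = (if i ∈ T then 0 else 1) + (if i = q then 1 else 0) := fun i => by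
    rw [haeq, MSF.vec_apply]
  obtain ⟨k0, hk0⟩ : ∃ k0, k0 ∉ I := by
    by_contra h; push_neg at h; exact hI (Set.eq_univ_of_forall h)
  set ε : ℝ := 1 / (n + 1) with hεdef
  have hε : 0 < ε := by positivity
  have hnε : (n : ℝ) * ε < 1 := by
    rw [hεdef, mul_one_div, div_lt_one (by positivity)]; linarith
  by_cases hqI : q ∈ I
  · -- Case q ∈ I
    have haq : a q = 2 := by rw [ha_i q, if_neg hqT, if_pos rfl]
    have hTc : ∀ i, i ∉ T → i ∈ I := by
      by_contra h; push_neg at h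
      obtain ⟨q', hq'T, hq'I⟩ := h
      refine hmin' T q' hT hq'T ?_ ⟨q, hqI, ?_⟩
      · intro i hi
        rw [MSF.vec_apply, ha_i i, if_neg (fun h : i = q' => hq'I (h ▸ hi)), add_zero]
        exact Nat.le_add_right _ _
      · rw [MSF.vec_apply, haq, if_neg hqT, if_neg (fun h : q = q' => hq'I (h ▸ hqI)),
          add_zero]
        norm_num
    have hKey : ∀ T', M.IsBase T' → T' ≠ T → ∃ i0, i0 ∈ I ∧ i0 ∈ T ∧ i0 ∉ T' := by
      intro T' hT' hne
      by_contra h; push_neg at h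
      by_cases hq' : ∃ q', q' ∉ T' ∧ q' ∉ I
      · obtain ⟨q', h1, h2⟩ := hq'
        refine hmin' T' q' hT' h1 ?_ ⟨q, hqI, ?_⟩
        · intro i hi
          rw [MSF.vec_apply, ha_i i, if_neg (fun hh : i = q' => h2 (hh ▸ hi)), add_zero]
          by_cases h3 : i ∈ T'
          · simp [h3]
          · have h4 : i ∉ T := fun hiT => h3 (h i hi hiT)
            rw [if_neg h3, if_neg h4]
            exact Nat.le_add_right _ _
        · rw [MSF.vec_apply, haq, if_neg (fun hh : q = q' => h2 (hh ▸ hqI)), add_zero]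
          by_cases h3 : q ∈ T' <;> simp [h3]
      · push_neg at hq'
        have hTT' : T ⊆ T' := fun x hxT => by
          by_contra hxT'; exact hxT' (h x (hq' x hxT') hxT)
        exact hne (hT.eq_of_subset_isBase hT' hTT').symm
    set v : Fin n → ℝ := fun i => if i = q then -ε else if i ∈ T then (if i ∈ I then 1 else 0) else ε with hv
    have hvq : v q = -ε := by simp [hv]
    have hv0 : ∀ k, k ≠ q → 0 ≤ v k := by
      intro k hk
      by_cases h1 : k ∈ T <;> by_cases h2 : k ∈ I <;> simp [hv, hk, h1, h2] <;> positivity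
    have hvge : ∀ k, -ε ≤ v k := by
      intro k
      by_cases hk : k = q
      · subst hk; rw [hvq]
      · linarith [hv0 k hk]
    have hV : ∀ T' k', ∑ i, v i * (MSF.vec T' k' i : ℝ)
        = (∑ i, if i ∈ T' then 0 else v i) + v k' := fun T' k' => MSF.sum_vec v T' k'
    have hWT_le : (∑ i, if i ∈ T then 0 else v i) ≤ (n:ℝ) * ε - 2 * ε := by
      have h1 : ∀ i ∈ Finset.univ (α := Fin n),
          (if i ∈ T then 0 else v i) ≤ ε + (if i = q then -(2*ε) else 0) := by
        intro i _
        by_cases h2 : i = q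
        · subst h2; rw [if_neg hqT, if_pos rfl, hvq]; linarith
        · rw [if_neg h2]
          by_cases h3 : i ∈ T
          · rw [if_pos h3]; linarith
          · rw [if_neg h3]; simp [hv, h2, h3]
      have h2 := Finset.sum_le_sum h1
      rw [Finset.sum_add_distrib] at h2
      have e1 : ∑ _i : Fin n, ε = n * ε := by simp [Finset.sum_const, mul_comm]
      have e2 : (∑ i : Fin n, if i = q then -(2*ε) else 0) = -(2*ε) := by simp
      rw [e1, e2] at h2
      linarith
    have hWT'ge : ∀ T', M.IsBase T' → T' ≠ T →
        1 - ε ≤ (∑ i, if i ∈ T' then 0 else v i) := by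
      intro T' hT' hne
      obtain ⟨i0, hi0I, hi0T, hi0T'⟩ := hKey T' hT' hne
      have hi0q : i0 ≠ q := fun h => hqT (h ▸ hi0T)
      have h1 : ∀ i ∈ Finset.univ (α := Fin n),
          ((if i = i0 then (1:ℝ) else 0) + (if i = q then -ε else 0))
            ≤ (if i ∈ T' then 0 else v i) := by
        intro i _
        by_cases h2 : i = i0
        · subst h2; rw [if_pos rfl, if_neg hi0q, if_neg hi0T', add_zero]
          simp [hv, hi0q, hi0T, hi0I]
        · rw [if_neg h2, zero_add]
          by_cases h3 : i = q
          · rw [if_pos h3, h3]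
            by_cases h4 : q ∈ T' <;> simp [h4, hvq] <;> linarith
          · rw [if_neg h3]
            by_cases h4 : i ∈ T' <;> simp [h4, hv0 i h3]
      have h2 := Finset.sum_le_sum h1
      rw [Finset.sum_add_distrib] at h2
      have e1 : (∑ i : Fin n, if i = i0 then (1:ℝ) else 0) = 1 := by simp
      have e2 : (∑ i : Fin n, if i = q then -ε else 0) = -ε := by simp
      rw [e1, e2] at h2
      linarith
    have haA : a ∈ A1 ∪ A2 := (memA a).mpr ⟨T, q, hT, haeq⟩
    have hamin : ∀ c ∈ A1 ∪ A2, ∑ i, v i * (a i : ℝ) ≤ ∑ i, v i * (c i : ℝ) := by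
      intro c hc
      obtain ⟨T'', k'', hT'', rfl⟩ := (memA c).mp hc
      rw [haeq, hV, hV]
      by_cases h2 : T'' = T
      · subst h2; linarith [hvge k'', hvq]
      · have h3 := hWT'ge T'' hT'' h2
        have h4 := hvge k''
        linarith [hWT_le, hvq, hnε, hε]
    refine ⟨v, ?_⟩
    ext b
    simp only [Set.mem_setOf_eq]
    constructor
    · rintro ⟨hbA, hpat⟩
      obtain ⟨T', k', hT', rfl⟩ := (memA b).mp hbA
      have h1 := hpat q hqI
      rw [MSF.vec_apply, haq] at h1
      have hk'q : q = k' := by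
        by_contra hh; by_cases h2 : q ∈ T' <;> simp [hh, h2] at h1
      have hqT' : q ∉ T' := by
        intro h2
        rw [if_pos h2, if_pos hk'q] at h1
        simp at h1
      have hiff : ∀ i ∈ I, i ∈ T' ↔ i ∈ T := by
        intro i hiI
        by_cases hiq : i = q
        · subst hiq; exact iff_of_false hqT' hqT
        · have hik' : i ≠ k' := fun hh => hiq (hh.trans hk'q.symm)
          have h2 := hpat i hiI
          rw [MSF.vec_apply, ha_i i, if_neg hiq, if_neg hik', add_zero, add_zero] at h2
          by_cases h3 : i ∈ T' <;> by_cases h4 : i ∈ T <;> simp [h3, h4] at h2 ⊢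
      have hT'T : T' = T := by
        apply hT'.eq_of_subset_isBase hT
        intro x hxT'
        by_contra hxT
        have hxI := hTc x hxT
        by_cases hxq : x = q
        · exact hqT' (hxq ▸ hxT')
        · exact hxT ((hiff x hxI).mp hxT')
      have hbeq : MSF.vec T' k' = a := by rw [haeq, hT'T, ← hk'q]
      rw [hbeq]
      exact ⟨hbeq ▸ hbA, hamin⟩
    · rintro ⟨hbA, hle⟩
      obtain ⟨T', k', hT', rfl⟩ := (memA b).mp hbA
      have h1 := hle a haA
      rw [haeq, hV, hV] at h1
      have hT'T : T' = T := by
        by_contra hne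
        have h3 := hWT'ge T' hT' hne
        have h4 := hvge k'
        linarith [hWT_le, hvq, hnε, hε]
      subst hT'T
      have hk'q : k' = q := by
        by_contra hne
        have h5 := hv0 k' hne
        linarith [hvq]
      subst hk'q
      exact ⟨hbA, fun i _ => by rw [haeq]⟩
  · -- Case q ∉ I
    set v : Fin n → ℝ := fun i => if i ∈ I then (if i ∈ T then 1 else ε) else 0 with hv
    have hv0 : ∀ i, 0 ≤ v i := by
      intro i; by_cases h1 : i ∈ I <;> by_cases h2 : i ∈ T <;> simp [hv, h1, h2] <;> positivity
    have hvI : ∀ k, k ∈ I → 0 < v k := by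
      intro k hk; by_cases h : k ∈ T <;> simp [hv, hk, h] <;> positivity
    have hV : ∀ T' k', ∑ i, v i * (MSF.vec T' k' i : ℝ)
        = (∑ i, if i ∈ T' then 0 else v i) + v k' := fun T' k' => MSF.sum_vec v T' k'
    have haI : ∀ i ∈ I, a i = if i ∈ T then 0 else 1 := by
      intro i hi
      rw [ha_i i, if_neg (fun h : i = q => hqI (h ▸ hi)), add_zero]
    have hNoBad : ∀ T', M.IsBase T' → (∀ i ∈ I, i ∈ T → i ∈ T') →
        ∀ i1 ∈ I, i1 ∈ T' → i1 ∈ T := by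
      intro T' hT' hsub i1 hi1I hi1T'
      by_contra hi1T
      by_cases hq' : ∃ q', q' ∉ T' ∧ q' ∉ I
      · obtain ⟨q', hq'T', hq'I⟩ := hq'
        refine hmin' T' q' hT' hq'T' ?_ ⟨i1, hi1I, ?_⟩
        · intro i hi
          rw [MSF.vec_apply, haI i hi, if_neg (fun h : i = q' => hq'I (h ▸ hi)), add_zero]
          by_cases h2 : i ∈ T'
          · simp [h2]
          · have h3 : i ∉ T := fun hiT => h2 (hsub i hi hiT)
            simp [h2, h3]
        · rw [MSF.vec_apply, haI i1 hi1I, if_pos hi1T', if_neg hi1T,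
            if_neg (fun h : i1 = q' => hq'I (h ▸ hi1I))]
          norm_num
      · push_neg at hq'
        have hTT' : T ⊆ T' := by
          intro x hxT
          by_contra hxT'
          exact hxT' (hsub x (hq' x hxT') hxT)
        have := hT.eq_of_subset_isBase hT' hTT'
        exact hi1T (this ▸ hi1T')
    have hWeq : ∀ T' : Set (Fin n), (∀ i ∈ I, (i ∈ T' ↔ i ∈ T)) →
        (∑ i, if i ∈ T' then 0 else v i) = (∑ i, if i ∈ T then 0 else v i) := by
      intro T' hiff
      apply Finset.sum_congr rfl
      intro i _
      by_cases hiI : i ∈ I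
      · by_cases hiT : i ∈ T
        · rw [if_pos ((hiff i hiI).mpr hiT), if_pos hiT]
        · rw [if_neg (fun h => hiT ((hiff i hiI).mp h)), if_neg hiT]
      · by_cases h1 : i ∈ T' <;> by_cases h2 : i ∈ T <;> simp [hv, hiI, h1, h2]
    have hWT_lt : (∑ i, if i ∈ T then 0 else v i) < 1 := by
      have h1 : (∑ i, if i ∈ T then 0 else v i) ≤ ∑ _i : Fin n, ε := by
        apply Finset.sum_le_sum
        intro i _
        by_cases h2 : i ∈ T
        · simp [h2]; positivity
        · by_cases h1 : i ∈ I <;> simp [hv, h1, h2] <;> positivity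
      have h2 : ∑ _i : Fin n, ε = n * ε := by
        simp [Finset.sum_const, mul_comm]
      linarith
    have hWmin : ∀ T', M.IsBase T' → (∀ i ∈ I, (i ∈ T' ↔ i ∈ T)) ∨
        1 ≤ (∑ i, if i ∈ T' then 0 else v i) := by
      intro T' hT'
      by_cases hsub : ∀ i ∈ I, i ∈ T → i ∈ T'
      · exact Or.inl fun i hiI => ⟨fun h => hNoBad T' hT' hsub i hiI h, hsub i hiI⟩
      · right
        push_neg at hsub
        obtain ⟨i0, hi0I, hi0T, hi0T'⟩ := hsub
        have h1 : (1:ℝ) = (if i0 ∈ T' then 0 else v i0) := by simp [hi0T', hv, hi0I, hi0T]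
        rw [h1]
        exact Finset.single_le_sum (f := fun i => if i ∈ T' then (0:ℝ) else v i)
          (fun i _ => by by_cases h : i ∈ T' <;> simp [h, hv0 i]) (Finset.mem_univ i0)
    have hWTle : ∀ T', M.IsBase T' →
        (∑ i, if i ∈ T then 0 else v i) ≤ (∑ i, if i ∈ T' then 0 else v i) := by
      intro T' hT'
      rcases hWmin T' hT' with h | h
      · rw [hWeq T' h]
      · linarith
    have hvk0 : v k0 = 0 := by simp [hv, hk0]
    refine ⟨v, ?_⟩
    ext b
    simp only [Set.mem_setOf_eq]
    constructor
    · rintro ⟨hbA, hpat⟩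
      obtain ⟨T', k', hT', rfl⟩ := (memA b).mp hbA
      have hk'I : k' ∉ I := by
        intro hk'I
        have h1 := hpat k' hk'I
        rw [MSF.vec_apply, haI k' hk'I] at h1
        have hk'T' : k' ∈ T' := by
          by_contra h; by_cases h2 : k' ∈ T <;> simp [h, h2] at h1
        have hk'T : k' ∉ T := by intro h2; simp [hk'T', h2] at h1
        have hsub : ∀ i ∈ I, i ∈ T → i ∈ T' := by
          intro i hiI hiT
          have h2 := hpat i hiI
          rw [MSF.vec_apply, haI i hiI, if_pos hiT] at h2
          by_contra h3
          by_cases h4 : i = k' <;> simp [h3, h4] at h2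
        exact hk'T (hNoBad T' hT' hsub k' hk'I hk'T')
      have hiff : ∀ i ∈ I, i ∈ T' ↔ i ∈ T := by
        intro i hiI
        have h2 := hpat i hiI
        rw [MSF.vec_apply, haI i hiI, if_neg (fun h : i = k' => hk'I (h ▸ hiI)), add_zero] at h2
        by_cases h3 : i ∈ T' <;> by_cases h4 : i ∈ T <;> simp [h3, h4] at h2 ⊢
      refine ⟨hbA, ?_⟩
      intro c hc
      obtain ⟨T'', k'', hT'', rfl⟩ := (memA c).mp hc
      rw [hV, hV, hWeq T' hiff]
      have h5 : v k' = 0 := by simp [hv, hk'I]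
      have h6 := hWTle T'' hT''
      have h7 := hv0 k''
      linarith
    · rintro ⟨hbA, hle⟩
      obtain ⟨T', k', hT', rfl⟩ := (memA b).mp hbA
      have hc0 : MSF.vec T k0 ∈ A1 ∪ A2 := (memA _).mpr ⟨T, k0, hT, rfl⟩
      have h1 := hle _ hc0
      rw [hV, hV, hvk0, add_zero] at h1
      have h2 := hWTle T' hT'
      have h3 := hv0 k'
      have hk'I : k' ∉ I := by
        intro h
        have h4 := hvI k' h
        linarith
      have hiff : ∀ i ∈ I, i ∈ T' ↔ i ∈ T := by
        rcases hWmin T' hT' with h | h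
        · exact h
        · exfalso; linarith
      refine ⟨hbA, ?_⟩
      intro i hiI
      rw [MSF.vec_apply, haI i hiI, if_neg (fun h : i = k' => hk'I (h ▸ hiI)), add_zero]
      by_cases h4 : i ∈ T
      · rw [if_pos ((hiff i hiI).mpr h4), if_pos h4]
      · rw [if_neg (fun h => h4 ((hiff i hiI).mp h)), if_neg h4]
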